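/- Let X be a complex Banach space and T a contraction on X satisfying condition (S). Then every point λ of the boundary spectrum of T (i.e., λ ∈ σ(T) with |λ| = 1) equals 1; that is, T is primitive. -/

import Mathlib

open Filter Topology

theorem stmt1 {X : Type*} [NormedAddCommGroup X] [NormedSpace ℂ X] [CompleteSpace X]
    (T : X →L[ℂ] X) (hT : ‖T‖ ≤ 1)
    (hS : ∀ x : ℕ → X, (∀ k, ‖x k‖ ≤ 1) →
      Tendsto (fun k => ‖T (x k)‖) atTop (𝓝 1) →
      Tendsto (fun k => ‖x k - T (x k)‖) atTop (𝓝 0)) :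
    ∀ lam ∈ spectrum ℂ T, ‖lam‖ = 1 → lam = 1 := by
  intro lam hlam habs
  have hlamnorm : ‖lam‖ = 1 := habs
  -- X is nontrivial
  have hnt : Nontrivial X := by
    by_contra h
    rw [not_nontrivial_iff_subsingleton] at h
    have : Subsingleton (X →L[ℂ] X) :=
      ⟨fun a b => ContinuousLinearMap.ext fun x => Subsingleton.elim _ _⟩
    exact spectrum.mem_iff.mp hlam (isUnit_of_subsingleton _)
  set a : X →L[ℂ] X := algebraMap ℂ (X →L[ℂ] X) lam - T with ha_def
  have ha : ¬ IsUnit a := spectrum.mem_iff.mp hlam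
  -- approximate eigenvectors
  have key : ∀ n : ℕ, ∃ x : X, ‖x‖ = 1 ∧ ‖lam • x - T x‖ ≤ 3 / ((n : ℝ) + 1) := by
    intro n
    have hn1 : (0:ℝ) < (n : ℝ) + 1 := by positivity
    set c : ℂ := ((1 + ((n:ℝ)+1)⁻¹ : ℝ) : ℂ) * lam with hc_def
    have hcnorm : ‖c‖ = 1 + ((n:ℝ)+1)⁻¹ := by
      rw [hc_def, norm_mul, hlamnorm, mul_one, Complex.norm_real,
        Real.norm_of_nonneg (by positivity)]
    have hcs : c ∉ spectrum ℂ T := by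
      intro hc
      have := spectrum.norm_le_norm_of_mem hc
      rw [hcnorm] at this
      have h2 := this.trans hT
      have h3 : (0:ℝ) < ((n:ℝ)+1)⁻¹ := by positivity
      linarith
    rw [spectrum.notMem_iff] at hcs
    obtain ⟨u, hu⟩ := hcs
    have hdiff : ‖a - (↑u : X →L[ℂ] X)‖ = ((n:ℝ)+1)⁻¹ := by
      have : a - (↑u : X →L[ℂ] X) = algebraMap ℂ (X →L[ℂ] X) (lam - c) := by
        rw [hu, ha_def, map_sub]; abel
      rw [this, norm_algebraMap', hc_def]
      have : lam - ((1 + ((n:ℝ)+1)⁻¹ : ℝ) : ℂ) * lam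
          = -(((((n:ℝ)+1)⁻¹ : ℝ) : ℂ) * lam) := by push_cast; ring
      rw [this, norm_neg, norm_mul, hlamnorm, mul_one, Complex.norm_real,
        Real.norm_of_nonneg (by positivity)]
    have hinv : (n:ℝ) + 1 ≤ ‖((↑u⁻¹ : X →L[ℂ] X))‖ := by
      by_contra hlt
      push_neg at hlt
      have hupos : 0 < ‖((↑u⁻¹ : X →L[ℂ] X))‖ := Units.norm_pos u⁻¹
      have hnear : ‖a - (↑u : X →L[ℂ] X)‖ < ‖((↑u⁻¹ : X →L[ℂ] X))‖⁻¹ := by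
        rw [hdiff]
        exact (inv_lt_inv₀ hn1 hupos).mpr hlt
      exact ha ⟨Units.ofNearby u a hnear, by simp⟩
    have h2 : ((n:ℝ)+1)/2 < ‖((↑u⁻¹ : X →L[ℂ] X))‖ := lt_of_lt_of_le (by linarith) hinv
    obtain ⟨y, hy1, hy2⟩ := ContinuousLinearMap.exists_lt_apply_of_lt_opNorm
      ((↑u⁻¹ : X →L[ℂ] X)) h2
    set z : X := (↑u⁻¹ : X →L[ℂ] X) y with hz_def
    have hzpos : 0 < ‖z‖ := lt_trans (by positivity) hy2
    refine ⟨‖z‖⁻¹ • z, ?_, ?_⟩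
    · rw [norm_smul, norm_inv, norm_norm, inv_mul_cancel₀ hzpos.ne']
    · have hax : lam • (‖z‖⁻¹ • z) - T (‖z‖⁻¹ • z) = a (‖z‖⁻¹ • z) := by
        simp [ha_def, Algebra.algebraMap_eq_smul_one, smul_sub, smul_comm lam]
      rw [hax]
      have huz : (↑u : X →L[ℂ] X) z = y := by
        rw [hz_def]
        have : (↑u : X →L[ℂ] X) ((↑u⁻¹ : X →L[ℂ] X) y)
            = ((↑u : X →L[ℂ] X) * (↑u⁻¹ : X →L[ℂ] X)) y := rfl
        rw [this, ← Units.val_mul, mul_inv_cancel, Units.val_one,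
          ContinuousLinearMap.one_apply]
      have hsplit : a (‖z‖⁻¹ • z)
          = (a - (↑u : X →L[ℂ] X)) (‖z‖⁻¹ • z) + ‖z‖⁻¹ • y := by
        have h1 : (↑u : X →L[ℂ] X) (‖z‖⁻¹ • z) = ‖z‖⁻¹ • y := by
          rw [ContinuousLinearMap.map_smul_of_tower, huz]
        have h2 := ContinuousLinearMap.sub_apply a (↑u : X →L[ℂ] X) (‖z‖⁻¹ • z)
        rw [h2, h1]
        abel
      rw [hsplit]
      have hb1 : ‖(a - (↑u : X →L[ℂ] X)) (‖z‖⁻¹ • z)‖ ≤ ((n:ℝ)+1)⁻¹ := by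
        calc ‖(a - (↑u : X →L[ℂ] X)) (‖z‖⁻¹ • z)‖
            ≤ ‖a - (↑u : X →L[ℂ] X)‖ * ‖(‖z‖⁻¹ • z)‖ :=
              ContinuousLinearMap.le_opNorm _ _
          _ = ((n:ℝ)+1)⁻¹ := by
              rw [hdiff, norm_smul, norm_inv, norm_norm,
                inv_mul_cancel₀ hzpos.ne', mul_one]
      have hb2 : ‖(‖z‖⁻¹ : ℝ) • y‖ ≤ 2 / ((n:ℝ)+1) := by
        rw [norm_smul, norm_inv, norm_norm]
        have h1 : ‖z‖⁻¹ ≤ 2 / ((n:ℝ)+1) := by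
          rw [inv_le_iff_one_le_mul₀ hzpos, div_mul_eq_mul_div, le_div_iff₀ hn1]
          nlinarith [hy2, hzpos]
        calc ‖z‖⁻¹ * ‖y‖ ≤ ‖z‖⁻¹ * 1 := by
              apply mul_le_mul_of_nonneg_left (le_of_lt hy1) (by positivity)
          _ = ‖z‖⁻¹ := mul_one _
          _ ≤ 2 / ((n:ℝ)+1) := h1
      calc ‖(a - (↑u : X →L[ℂ] X)) (‖z‖⁻¹ • z) + ‖z‖⁻¹ • y‖
          ≤ ‖(a - (↑u : X →L[ℂ] X)) (‖z‖⁻¹ • z)‖ + ‖(‖z‖⁻¹ : ℝ) • y‖ := norm_add_le _ _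
        _ ≤ ((n:ℝ)+1)⁻¹ + 2 / ((n:ℝ)+1) := add_le_add hb1 hb2
        _ = 3 / ((n:ℝ)+1) := by field_simp; ring
  choose x hx1 hx2 using key
  have hb0 : Tendsto (fun n : ℕ => 3 / ((n:ℝ)+1)) atTop (𝓝 0) := by
    have := tendsto_one_div_add_atTop_nhds_zero_nat.const_mul (3:ℝ)
    simpa [div_eq_mul_inv, mul_comm] using this
  have hxle : ∀ k, ‖x k‖ ≤ 1 := fun k => le_of_eq (hx1 k)
  -- ‖T x_n - lam • x_n‖ → 0
  have hTev : Tendsto (fun n => ‖lam • x n - T (x n)‖) atTop (𝓝 0) := by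
    apply squeeze_zero (fun n => norm_nonneg _) hx2 hb0
  -- ‖T x_n‖ → 1
  have hTx : Tendsto (fun n => ‖T (x n)‖) atTop (𝓝 1) := by
    rw [tendsto_iff_dist_tendsto_zero]
    apply squeeze_zero (fun n => dist_nonneg) _ hTev
    intro n
    have h1 : ‖lam • x n‖ = 1 := by rw [norm_smul, hlamnorm, hx1, mul_one]
    calc dist ‖T (x n)‖ 1 = |‖T (x n)‖ - ‖lam • x n‖| := by rw [Real.dist_eq, h1]
      _ ≤ ‖T (x n) - lam • x n‖ := abs_norm_sub_norm_le _ _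
      _ = ‖lam • x n - T (x n)‖ := by rw [norm_sub_rev]
  have hstrong := hS x hxle hTx
  -- |1 - lam| ≤ ‖x n - T x n‖ + ‖lam • x n - T x n‖
  have hfinal : ∀ n, ‖(1 : ℂ) - lam‖ ≤ ‖x n - T (x n)‖ + ‖lam • x n - T (x n)‖ := by
    intro n
    have h1 : ‖(1:ℂ) - lam‖ = ‖x n - lam • x n‖ := by
      rw [show x n - lam • x n = ((1:ℂ) - lam) • x n by rw [sub_smul, one_smul],
        norm_smul, hx1, mul_one]
    rw [h1]
    calc ‖x n - lam • x n‖ = ‖(x n - T (x n)) - (lam • x n - T (x n))‖ := by abel_nf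
      _ ≤ ‖x n - T (x n)‖ + ‖lam • x n - T (x n)‖ := norm_sub_le _ _
  have hsum : Tendsto (fun n => ‖x n - T (x n)‖ + ‖lam • x n - T (x n)‖) atTop (𝓝 0) := by
    simpa using hstrong.add hTev
  have : ‖(1:ℂ) - lam‖ ≤ 0 := ge_of_tendsto' hsum hfinal
  have : (1:ℂ) - lam = 0 := by
    have := le_antisymm this (norm_nonneg _)
    exact norm_eq_zero.mp this
  linear_combination -this
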